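/- Let f be analytic in Ω(r_0, θ_1, θ_2) = {z : θ_1 < arg z < θ_2, |z| ≥ r_0}, let U be a hyperbolic domain (a domain whose complement in the extended plane contains at least three points), and suppose f maps Ω(r_0, θ_1, θ_2) into U. If there exists a finite point a ∈ ∂U with C_U(a) > 0, then there exists a constant d > 0 such that for all sufficiently small ε > 0, |f(z)| = O(|z|^d) as z → ∞ with z ∈ Ω(r_0, θ_1 + ε, θ_2 − ε). -/

import Mathlib

open MeasureTheory Filter Set Metric Asymptotics
open scoped ENNReal

/-- `log⁺ x = max (log x) 0`. -/
noncomputable def posLog (x : ℝ) : ℝ := max (Real.log x) 0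

/-- The point `r·e^{iθ}` of the circle of radius `r` at angle `θ`. -/
noncomputable def circPt (r θ : ℝ) : ℂ := (r : ℂ) * Complex.exp (θ * Complex.I)

/-- The Nevanlinna proximity function `m(r, f)`.  For an entire function `f` this coincides
with the Nevanlinna characteristic `T(r, f)`. -/
noncomputable def nevProx (f : ℂ → ℂ) (r : ℝ) : ℝ :=
  (2 * Real.pi)⁻¹ * ∫ θ in (0:ℝ)..(2 * Real.pi), posLog ‖f (circPt r θ)‖

/-- The lower order `μ = liminf_{r→∞} log T(r) / log r` of a growth function `T`. -/
noncomputable def lowerOrder (T : ℝ → ℝ) : ℝ≥0∞ :=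
  Filter.liminf (fun r : ℝ => ENNReal.ofReal (Real.log (T r) / Real.log r)) Filter.atTop

/-- An entire function that is not a polynomial. -/
def TranscendentalEntire (f : ℂ → ℂ) : Prop :=
  Differentiable ℂ f ∧ ¬ ∃ p : Polynomial ℂ, ∀ z, f z = Polynomial.eval z p

/-- The open angle `Ω(α, β) = {z : α < arg z < β}` (arguments taken mod `2π`). -/
def angSector (α β : ℝ) : Set ℂ :=
  {z | ∃ ρ φ : ℝ, 0 < ρ ∧ α < φ ∧ φ < β ∧ z = circPt ρ φ}

/-- The sequence of functions `F` tends to `∞` locally uniformly on `U`. -/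
def LocUnifToInf (F : ℕ → ℂ → ℂ) (U : Set ℂ) : Prop :=
  ∀ K ⊆ U, IsCompact K → ∀ M : ℝ, ∀ᶠ m in atTop, ∀ z ∈ K, M ≤ ‖F m z‖

/-- The family `F` is normal on `U`: every sequence drawn from the family has a subsequence
converging locally uniformly on `U`, either to a finite limit function or to `∞`. -/
def NormalFamilyOn (F : ℕ → ℂ → ℂ) (U : Set ℂ) : Prop :=
  ∀ s : ℕ → ℕ, ∃ t : ℕ → ℕ, StrictMono t ∧
    ((∃ g : ℂ → ℂ, TendstoLocallyUniformlyOn (fun m => F (s (t m))) g atTop U) ∨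
      LocUnifToInf (fun m => F (s (t m))) U)

/-- The Fatou set of `f`: points with a neighbourhood on which the iterates form a normal
family. -/
def fatouSet (f : ℂ → ℂ) : Set ℂ :=
  {z | ∃ U : Set ℂ, IsOpen U ∧ z ∈ U ∧ NormalFamilyOn (fun m => f^[m]) U}

/-- The Julia set of `f`. -/
def juliaSet (f : ℂ → ℂ) : Set ℂ := (fatouSet f)ᶜ

/-- `Δ(f)`: the set of `θ ∈ [0, 2π)` such that `J(f)` is unbounded in every angle
`Ω(θ - ε, θ + ε)`. -/
def radialJulia (f : ℂ → ℂ) : Set ℝ :=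
  {θ | θ ∈ Ico 0 (2 * Real.pi) ∧
    ∀ ε > 0, ∀ R : ℝ, ∃ z ∈ juliaSet f ∩ angSector (θ - ε) (θ + ε), R < ‖z‖}

/-- `Ω(r₀, α, β) = {z : α < arg z < β, |z| ≥ r₀}`. -/
def angSectorFrom (r₀ α β : ℝ) : Set ℂ :=
  angSector α β ∩ {z | r₀ ≤ ‖z‖}

/-- The hyperbolic density `λ_U` on a hyperbolic domain `U` (for the complete metric of
constant curvature `−1`), characterised by
`λ_U(z) = 2 / sup {|φ'(0)| : φ : 𝔻 → U holomorphic, φ(0) = z}`. -/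
noncomputable def hypDensity (U : Set ℂ) (z : ℂ) : ℝ :=
  2 / sSup {c : ℝ | ∃ φ : ℂ → ℂ, DifferentiableOn ℂ φ (Metric.ball 0 1) ∧
      Set.MapsTo φ (Metric.ball 0 1) U ∧ φ 0 = z ∧ c = ‖deriv φ 0‖}

/-- `C_U(a) = inf {λ_U(z)·|z − a| : z ∈ U}`. -/
noncomputable def hypC (U : Set ℂ) (a : ℂ) : ℝ :=
  sInf {t : ℝ | ∃ z ∈ U, t = hypDensity U z * ‖z - a‖}

/-! ### Auxiliary lemmas -/

lemma hypDensity_nonneg' (U : Set ℂ) (z : ℂ) : 0 ≤ hypDensity U z := by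
  apply div_nonneg (by norm_num)
  apply Real.sSup_nonneg
  rintro c ⟨φ, -, -, -, rfl⟩
  exact norm_nonneg _

/-- The Schwarz–Pick-type inequality extracted from the definition of `hypC`. -/
lemma hypC_schwarz (U : Set ℂ) (a : ℂ) (hCa : 0 < hypC U a) {z : ℂ} (hz : z ∈ U)
    {φ : ℂ → ℂ} (hφd : DifferentiableOn ℂ φ (Metric.ball 0 1))
    (hφm : Set.MapsTo φ (Metric.ball 0 1) U) (hφ0 : φ 0 = z) :
    hypC U a * ‖deriv φ 0‖ ≤ 2 * ‖z - a‖ := by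
  set S := {c : ℝ | ∃ φ : ℂ → ℂ, DifferentiableOn ℂ φ (Metric.ball 0 1) ∧
      Set.MapsTo φ (Metric.ball 0 1) U ∧ φ 0 = z ∧ c = ‖deriv φ 0‖} with hS
  have hd : hypDensity U z = 2 / sSup S := rfl
  have hTb : BddBelow {t : ℝ | ∃ z ∈ U, t = hypDensity U z * ‖z - a‖} := by
    refine ⟨0, ?_⟩
    rintro t ⟨w, hw, rfl⟩
    exact mul_nonneg (hypDensity_nonneg' U w) (norm_nonneg _)
  have hle : hypC U a ≤ hypDensity U z * ‖z - a‖ := csInf_le hTb ⟨z, hz, rfl⟩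
  rw [hd] at hle
  have hsnn : 0 ≤ sSup S := by
    apply Real.sSup_nonneg; rintro c ⟨ψ, -, -, -, rfl⟩; exact norm_nonneg _
  have hs : 0 < sSup S := by
    rcases hsnn.lt_or_eq with h | h
    · exact h
    · exfalso
      rw [← h, div_zero, zero_mul] at hle
      exact absurd (hCa.trans_le hle) (lt_irrefl 0)
  have hbdd : BddAbove S := by
    by_contra h
    have := Real.sSup_of_not_bddAbove h
    rw [this] at hs; exact lt_irrefl 0 hs
  have hmem : ‖deriv φ 0‖ ∈ S := ⟨φ, hφd, hφm, hφ0, rfl⟩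
  have hle2 : ‖deriv φ 0‖ ≤ sSup S := le_csSup hbdd hmem
  have h1 : hypC U a * sSup S ≤ 2 * ‖z - a‖ := by
    rw [div_mul_eq_mul_div, le_div_iff₀ hs] at hle
    linarith [hle]
  calc hypC U a * ‖deriv φ 0‖ ≤ hypC U a * sSup S :=
        mul_le_mul_of_nonneg_left hle2 hCa.le
    _ ≤ 2 * ‖z - a‖ := h1

lemma norm_circPt' {ρ : ℝ} (hρ : 0 ≤ ρ) (ψ : ℝ) : ‖circPt ρ ψ‖ = ρ := by
  simp [circPt, map_mul, Complex.norm_exp_ofReal_mul_I, abs_of_nonneg hρ]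

/-- A ball of radius `(δ/4)ρ` about a sector point of modulus `ρ` whose angle has margin `δ`
stays inside the sector. -/
lemma ball_subset_angSectorFrom (r₀ θ₁ θ₂ : ℝ) {ρ ψ δ : ℝ} (hρ : max (2 * |r₀|) 1 ≤ ρ)
    (hδ : 0 < δ) (hδ1 : δ ≤ 1) (h1 : θ₁ + δ ≤ ψ) (h2 : ψ ≤ θ₂ - δ) :
    Metric.ball (circPt ρ ψ) (δ / 4 * ρ) ⊆ angSectorFrom r₀ θ₁ θ₂ := by
  have hρ1 : (1 : ℝ) ≤ ρ := le_trans (le_max_right _ _) hρ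
  have hρr : 2 * |r₀| ≤ ρ := le_trans (le_max_left _ _) hρ
  have hρ0 : 0 < ρ := lt_of_lt_of_le one_pos hρ1
  intro x hx
  set w : ℂ := circPt ρ ψ with hw
  have hw0 : w ≠ 0 := by
    intro h
    have := norm_circPt' hρ0.le ψ
    rw [← hw, h] at this; simp at this; linarith
  set u : ℂ := (x - w) / w with hu
  have hxu : x = w * (1 + u) := by
    rw [hu, mul_add, mul_one, mul_div_assoc', mul_comm w (x - w), mul_div_assoc, div_self hw0, mul_one]
    ring
  have hnx : ‖x - w‖ < δ / 4 * ρ := by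
    rwa [mem_ball, dist_eq_norm] at hx
  have hnw : ‖w‖ = ρ := norm_circPt' hρ0.le ψ
  have hun : ‖u‖ < δ / 4 := by
    rw [hu, norm_div, hnw, div_lt_iff₀ hρ0]
    exact hnx
  have hu4 : ‖u‖ < 1 / 4 := lt_of_lt_of_le hun (by linarith)
  have hure : |u.re| ≤ ‖u‖ := Complex.abs_re_le_norm u
  have huim : |u.im| ≤ ‖u‖ := Complex.abs_im_le_norm u
  have h1u_re : (3:ℝ)/4 < (1 + u).re := by
    simp only [Complex.add_re, Complex.one_re]
    have := abs_le.1 hure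
    linarith
  have h1u_ne : (1 + u : ℂ) ≠ 0 := by
    intro h
    rw [h] at h1u_re; simp at h1u_re; linarith
  have habs : (3:ℝ)/4 ≤ ‖1 + u‖ := by
    have := Complex.abs_re_le_norm (1 + u)
    calc (3:ℝ)/4 ≤ (1+u).re := h1u_re.le
      _ ≤ |(1+u).re| := le_abs_self _
      _ ≤ ‖1 + u‖ := this
  have harg : |Complex.arg (1 + u)| < δ := by
    have hargeq : Complex.arg (1 + u) = Real.arcsin ((1 + u).im / ‖1 + u‖) :=
      Complex.arg_of_re_nonneg (by linarith)
    have hratio : |(1 + u).im / ‖1 + u‖| < δ / 3 := by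
      rw [abs_div, abs_of_nonneg (norm_nonneg _)]
      have him : |(1 + u).im| < δ / 4 := by
        simp only [Complex.add_im, Complex.one_im, zero_add]
        exact lt_of_le_of_lt huim hun
      rw [div_lt_iff₀ (lt_of_lt_of_le (by norm_num) habs)]
      nlinarith [norm_nonneg (1 + u)]
    have hsin : δ / 3 < Real.sin δ := by
      have := Real.sin_gt_sub_cube hδ
      nlinarith [hδ, hδ1, sq_nonneg δ]
    have hδpi : δ ≤ Real.pi / 2 := by
      have := Real.pi_gt_three
      linarith
    rw [hargeq, abs_lt]
    constructor
    · rw [neg_lt, ← Real.arcsin_neg]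
      rw [Real.arcsin_lt_iff_lt_sin' ⟨by linarith [Real.pi_pos], hδpi⟩]
      have := abs_lt.1 hratio
      linarith [hsin]
    · rw [Real.arcsin_lt_iff_lt_sin' ⟨by linarith [Real.pi_pos], hδpi⟩]
      have := abs_lt.1 hratio
      linarith [hsin]
  have habs0 : 0 < ‖1 + u‖ := by linarith
  constructor
  · refine ⟨ρ * ‖1 + u‖, ψ + Complex.arg (1 + u), by positivity, ?_, ?_, ?_⟩
    · have := abs_lt.1 harg; linarith
    · have := abs_lt.1 harg; linarith
    · have key : circPt (ρ * ‖1 + u‖) (ψ + Complex.arg (1 + u)) = w * (1 + u) := by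
        conv_rhs => rw [hw, ← Complex.norm_mul_exp_arg_mul_I (1 + u)]
        simp only [circPt]
        push_cast
        rw [add_mul, Complex.exp_add]
        ring
      rw [hxu, key]
  · show r₀ ≤ ‖x‖
    have hxn : ‖x‖ = ρ * ‖1 + u‖ := by
      rw [hxu, norm_mul, hnw]
    rw [hxn]
    have h34 : |r₀| ≤ ρ * (3/4) := by nlinarith [abs_nonneg r₀]
    calc r₀ ≤ |r₀| := le_abs_self _
      _ ≤ ρ * (3/4) := h34
      _ ≤ ρ * ‖1 + u‖ := by nlinarith

/-- The hyperbolic derivative estimate for `f` at sector points. -/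
lemma deriv_bound_at_sector {r₀ θ₁ θ₂ : ℝ} {f : ℂ → ℂ}
    (hf : DifferentiableOn ℂ f (angSectorFrom r₀ θ₁ θ₂))
    {U : Set ℂ} (hmaps : Set.MapsTo f (angSectorFrom r₀ θ₁ θ₂) U)
    {a : ℂ} (hCa : 0 < hypC U a)
    {ρ ψ δ : ℝ} (hρ : max (2 * |r₀|) 1 ≤ ρ) (hδ : 0 < δ) (hδ1 : δ ≤ 1)
    (h1 : θ₁ + δ ≤ ψ) (h2 : ψ ≤ θ₂ - δ) :
    hypC U a * (δ / 4 * ρ * ‖deriv f (circPt ρ ψ)‖) ≤ 2 * ‖f (circPt ρ ψ) - a‖ := by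
  have hρ0 : (0:ℝ) < ρ := lt_of_lt_of_le one_pos (le_trans (le_max_right _ _) hρ)
  set c : ℝ := δ / 4 * ρ with hc
  have hc0 : 0 < c := by positivity
  set w : ℂ := circPt ρ ψ with hw
  have hball : Metric.ball w c ⊆ angSectorFrom r₀ θ₁ θ₂ :=
    ball_subset_angSectorFrom r₀ θ₁ θ₂ hρ hδ hδ1 h1 h2
  have hwmem : w ∈ Metric.ball w c := Metric.mem_ball_self hc0
  have hfw : f w ∈ U := hmaps (hball hwmem)
  set φfun : ℂ → ℂ := fun v => f (w + (c : ℂ) * v) with hφfun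
  have hinner_maps : Set.MapsTo (fun v : ℂ => w + (c:ℂ) * v) (Metric.ball 0 1)
      (Metric.ball w c) := by
    intro v hv
    rw [Metric.mem_ball, dist_eq_norm] at hv ⊢
    simp only [add_sub_cancel_left, norm_mul, Complex.norm_real, Real.norm_eq_abs,
      abs_of_pos hc0]
    calc c * ‖v‖ < c * 1 := mul_lt_mul_of_pos_left (by simpa using hv) hc0
      _ = c := mul_one c
  have hinner_diff : Differentiable ℂ (fun v : ℂ => w + (c:ℂ) * v) := by
    apply Differentiable.add
    · exact differentiable_const _
    · exact (differentiable_id.const_mul _)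
  have hφdiff : DifferentiableOn ℂ φfun (Metric.ball 0 1) := by
    apply (hf.mono hball).comp hinner_diff.differentiableOn hinner_maps
  have hφm : Set.MapsTo φfun (Metric.ball 0 1) U := fun v hv => hmaps (hball (hinner_maps hv))
  have hφ0 : φfun 0 = f w := by simp [hφfun]
  have hdfw : HasDerivAt f (deriv f w) w := by
    have : DifferentiableAt ℂ f w :=
      (hf.mono hball).differentiableAt (Metric.isOpen_ball.mem_nhds hwmem)
    exact this.hasDerivAt
  have hinner_deriv : HasDerivAt (fun v : ℂ => w + (c:ℂ) * v) (c : ℂ) 0 := by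
    simpa using ((hasDerivAt_id (0:ℂ)).const_mul (c:ℂ)).const_add w
  have hcomp : HasDerivAt φfun (deriv f w * c) 0 := by
    have hdfw' : HasDerivAt f (deriv f w) (w + (c:ℂ) * 0) := by
      rwa [mul_zero, add_zero]
    have := HasDerivAt.comp (0:ℂ) hdfw' hinner_deriv
    simpa [hφfun, Function.comp_def] using this
  have hderiv : deriv φfun 0 = deriv f w * c := hcomp.deriv
  have := hypC_schwarz U a hCa hfw hφdiff hφm hφ0
  rw [hderiv] at this
  rw [norm_mul, Complex.norm_real, Real.norm_eq_abs, abs_of_pos hc0] at this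
  calc hypC U a * (c * ‖deriv f w‖) = hypC U a * (‖deriv f w‖ * c) := by ring
    _ ≤ 2 * ‖f w - a‖ := this

/-- A Grönwall estimate along the path `t ↦ A·e^{tc}` inside the sector. -/
lemma gronwall_along_path {r₀ θ₁ θ₂ : ℝ} {f : ℂ → ℂ}
    (hf : DifferentiableOn ℂ f (angSectorFrom r₀ θ₁ θ₂))
    {U : Set ℂ} (hmaps : Set.MapsTo f (angSectorFrom r₀ θ₁ θ₂) U)
    {a : ℂ} (hCa : 0 < hypC U a)
    {δ : ℝ} (hδ : 0 < δ) (hδ1 : δ ≤ 1) (A c : ℂ) {b : ℝ} (hb : 0 ≤ b)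
    (hin : ∀ t ∈ Set.Icc (0:ℝ) b, ∃ ρ ψ : ℝ, max (2 * |r₀|) 1 ≤ ρ ∧
      θ₁ + δ ≤ ψ ∧ ψ ≤ θ₂ - δ ∧ A * Complex.exp ((t:ℂ) * c) = circPt ρ ψ) :
    ‖f (A * Complex.exp ((b:ℂ) * c)) - a‖ ≤
      ‖f (A * Complex.exp ((0:ℂ) * c)) - a‖ *
        Real.exp (‖c‖ * (8 / (hypC U a * δ)) * b) := by
  set C := hypC U a with hC
  set γ : ℝ → ℂ := fun t => A * Complex.exp ((t:ℂ) * c) with hγ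
  have hγd : ∀ t : ℝ, HasDerivAt γ (c * γ t) t := by
    intro t
    have hinner : HasDerivAt (fun t : ℝ => (t:ℂ) * c) ((1:ℂ) * c) t :=
      (Complex.ofRealCLM.hasDerivAt).mul_const c
    have hexp : HasDerivAt (fun t : ℝ => Complex.exp ((t:ℂ) * c))
        (((1:ℂ) * c) • Complex.exp ((t:ℂ) * c)) t :=
      (Complex.hasDerivAt_exp _).scomp t hinner
    have h2 := hexp.const_mul A
    have h3 : A * (((1:ℂ) * c) • Complex.exp ((t:ℂ) * c)) = c * γ t := by
      rw [smul_eq_mul, hγ]; ring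
    rw [h3] at h2
    exact h2
  set g : ℝ → ℂ := fun t => f (γ t) - a with hg
  set g' : ℝ → ℂ := fun t => (c * γ t) * deriv f (γ t) with hg'
  have hgd : ∀ t ∈ Set.Icc (0:ℝ) b, HasDerivAt g (g' t) t := by
    intro t ht
    obtain ⟨ρ, ψ, hρ, h1, h2, heq⟩ := hin t ht
    have hρ0 : (0:ℝ) < ρ := lt_of_lt_of_le one_pos (le_trans (le_max_right _ _) hρ)
    have hball := ball_subset_angSectorFrom r₀ θ₁ θ₂ (δ := δ) hρ hδ hδ1 h1 h2
    have heq' : γ t = circPt ρ ψ := heq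
    have hmem : γ t ∈ Metric.ball (circPt ρ ψ) (δ / 4 * ρ) := by
      rw [heq']
      exact Metric.mem_ball_self (by positivity)
    have hdfa : DifferentiableAt ℂ f (γ t) :=
      (hf.mono hball).differentiableAt (Metric.isOpen_ball.mem_nhds hmem)
    have := (hdfa.hasDerivAt.scomp t (hγd t)).sub_const a
    simpa [hg, hg', smul_eq_mul, mul_comm] using this
  have hcont : ContinuousOn g (Set.Icc 0 b) := fun t ht =>
    ((hgd t ht).differentiableAt.continuousAt).continuousWithinAt
  have hCδ : 0 < C * δ := mul_pos hCa hδ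
  set K : ℝ := ‖c‖ * (8 / (C * δ)) with hK
  have hbound : ∀ t ∈ Set.Ico (0:ℝ) b, ‖g' t‖ ≤ K * ‖g t‖ + 0 := by
    intro t ht
    obtain ⟨ρ, ψ, hρ, h1, h2, heq⟩ := hin t (Set.Ico_subset_Icc_self ht)
    have hρ0 : (0:ℝ) < ρ := lt_of_lt_of_le one_pos (le_trans (le_max_right _ _) hρ)
    have heq' : γ t = circPt ρ ψ := heq
    have hγnorm : ‖γ t‖ = ρ := by rw [heq']; exact norm_circPt' hρ0.le ψ
    have hlemB := deriv_bound_at_sector hf hmaps hCa (ρ := ρ) (ψ := ψ) hρ hδ hδ1 h1 h2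
    have hgt : ‖g t‖ = ‖f (circPt ρ ψ) - a‖ := by show ‖f (γ t) - a‖ = _; rw [heq']
    have hD : ‖deriv f (γ t)‖ = ‖deriv f (circPt ρ ψ)‖ := by rw [heq']
    have hstep : ρ * ‖deriv f (circPt ρ ψ)‖ ≤ 8 / (C * δ) * ‖f (circPt ρ ψ) - a‖ := by
      rw [div_mul_eq_mul_div, le_div_iff₀ hCδ]
      nlinarith [hlemB]
    have hgn : ‖g' t‖ = ‖c‖ * (ρ * ‖deriv f (circPt ρ ψ)‖) := by
      rw [hg']; simp only [norm_mul, hγnorm, hD]; ring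
    rw [hgn, hgt, add_zero, hK, mul_assoc]
    exact mul_le_mul_of_nonneg_left hstep (norm_nonneg c)
  have := norm_le_gronwallBound_of_norm_deriv_right_le hcont
    (fun t ht => (hgd t (Set.Ico_subset_Icc_self ht)).hasDerivWithinAt)
    (le_refl ‖g 0‖) hbound b (Set.right_mem_Icc.2 hb)
  rw [gronwallBound_ε0, sub_zero] at this
  simpa [hg, hγ, hK] using this
set_option maxHeartbeats 1000000

/-- **Lemma 2.1.**  Let `f` be analytic in `Ω(r₀, θ₁, θ₂)`, let `U` be a hyperbolic domain
with `f : Ω(r₀, θ₁, θ₂) → U`.  If there is a finite boundary point `a ∈ ∂U` with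
`C_U(a) > 0`, then there is `d > 0` such that for all sufficiently small `ε > 0` one has
`|f(z)| = O(|z|^d)` as `z → ∞` in `Ω(r₀, θ₁ + ε, θ₂ − ε)`. -/
theorem polynomial_growth_of_maps_to_hyperbolic (r₀ θ₁ θ₂ : ℝ) (hθ : θ₁ < θ₂)
    (f : ℂ → ℂ) (hf : DifferentiableOn ℂ f (angSectorFrom r₀ θ₁ θ₂))
    (U : Set ℂ) (hUopen : IsOpen U) (hUconn : IsConnected U)
    (hUhyp : ∃ a b : ℂ, a ≠ b ∧ a ∉ U ∧ b ∉ U)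
    (hmaps : Set.MapsTo f (angSectorFrom r₀ θ₁ θ₂) U)
    (a : ℂ) (ha : a ∈ frontier U) (hCa : 0 < hypC U a) :
    ∃ d : ℝ, 0 < d ∧ ∃ ε₀ > 0, ∀ ε, 0 < ε → ε < ε₀ →
      ∃ C R : ℝ, ∀ z ∈ angSectorFrom r₀ (θ₁ + ε) (θ₂ - ε),
        R ≤ ‖z‖ → ‖f z‖ ≤ C * ‖z‖ ^ d := by
  set Ca := hypC U a with hCdef
  set δ₀ : ℝ := min ((θ₂ - θ₁) / 2) 1 with hδ₀def
  have hδ₀pos : 0 < δ₀ := lt_min (by linarith) one_pos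
  have hδ₀1 : δ₀ ≤ 1 := min_le_right _ _
  have hδ₀half : δ₀ ≤ (θ₂ - θ₁) / 2 := min_le_left _ _
  set R₀ : ℝ := max (2 * |r₀|) 1 with hR₀def
  have hR₀1 : (1:ℝ) ≤ R₀ := le_max_right _ _
  have hR₀0 : (0:ℝ) < R₀ := lt_of_lt_of_le one_pos hR₀1
  set φc : ℝ := (θ₁ + θ₂) / 2 with hφcdef
  have hφc1 : θ₁ + δ₀ ≤ φc := by rw [hφcdef]; linarith
  have hφc2 : φc ≤ θ₂ - δ₀ := by rw [hφcdef]; linarith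
  set d : ℝ := 8 / (Ca * δ₀) with hddef
  have hd : 0 < d := by rw [hddef]; positivity
  refine ⟨d, hd, δ₀, hδ₀pos, ?_⟩
  intro ε hε hεδ₀
  have hε1 : ε ≤ 1 := le_trans hεδ₀.le hδ₀1
  set M₀ : ℝ := ‖f (circPt R₀ φc) - a‖ with hM₀def
  set E : ℝ := Real.exp ((θ₂ - θ₁) * (8 / (Ca * ε))) with hEdef
  have hE1 : (1:ℝ) ≤ E := by
    rw [hEdef, Real.one_le_exp_iff]
    apply mul_nonneg (by linarith) (by positivity)
  refine ⟨M₀ * E + ‖a‖, R₀, ?_⟩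
  rintro z ⟨⟨ρz, φz, hρz0, hφz1, hφz2, rfl⟩, -⟩ hRz
  have hρznorm : ‖circPt ρz φz‖ = ρz := norm_circPt' hρz0.le φz
  rw [hρznorm] at hRz ⊢
  have hρz1 : (1:ℝ) ≤ ρz := le_trans hR₀1 hRz
  -- the angle of z lies in (θ₁, θ₂) with margin ε
  have hφzin1 : θ₁ + ε < φz := hφz1
  have hφzin2 : φz < θ₂ - ε := hφz2
  have hφcε1 : θ₁ + ε ≤ φc := by rw [hφcdef]; linarith [hδ₀half, hεδ₀]
  have hφcε2 : φc ≤ θ₂ - ε := by rw [hφcdef]; linarith [hδ₀half, hεδ₀]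
  -- Step 1: radial Grönwall from radius R₀ to ρz at the central angle φc
  set T : ℝ := Real.log (ρz / R₀) with hTdef
  have hT0 : 0 ≤ T := Real.log_nonneg ((one_le_div hR₀0).2 hRz)
  set A₁ : ℂ := (R₀ : ℂ) * Complex.exp ((φc : ℂ) * Complex.I) with hA₁def
  have hrad_eq : ∀ t : ℝ, A₁ * Complex.exp ((t:ℂ) * 1) = circPt (R₀ * Real.exp t) φc := by
    intro t
    simp only [circPt, hA₁def, mul_one]
    push_cast [Complex.ofReal_exp]
    ring
  have hrad := gronwall_along_path hf hmaps hCa hδ₀pos hδ₀1 A₁ 1 hT0 (fun t ht => by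
    refine ⟨R₀ * Real.exp t, φc, ?_, hφc1, hφc2, hrad_eq t⟩
    calc max (2 * |r₀|) 1 = R₀ := rfl
      _ = R₀ * 1 := (mul_one R₀).symm
      _ ≤ R₀ * Real.exp t := by
          apply mul_le_mul_of_nonneg_left _ hR₀0.le
          rw [show (1:ℝ) = Real.exp 0 from (Real.exp_zero).symm]
          exact Real.exp_le_exp.2 ht.1)
  have hexpT : R₀ * Real.exp T = ρz := by
    rw [hTdef, Real.exp_log (by positivity)]
    field_simp
  have hγT : A₁ * Complex.exp ((T:ℂ) * 1) = circPt ρz φc := by rw [hrad_eq T, hexpT]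
  have hγ0 : A₁ * Complex.exp ((0:ℂ) * 1) = circPt R₀ φc := by
    have h := hrad_eq 0
    push_cast at h
    rw [h, Real.exp_zero, mul_one]
  rw [hγT, hγ0] at hrad
  have hrad' : ‖f (circPt ρz φc) - a‖ ≤ M₀ * Real.exp (d * T) := by
    have hnorm1 : ‖(1:ℂ)‖ = 1 := norm_one
    calc ‖f (circPt ρz φc) - a‖ ≤ M₀ * Real.exp (‖(1:ℂ)‖ * (8 / (Ca * δ₀)) * T) := hrad
      _ = M₀ * Real.exp (d * T) := by rw [hnorm1, one_mul, hddef]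
  -- Step 2: circular Grönwall from angle φc to angle φz at radius ρz
  set Δ : ℝ := φz - φc with hΔdef
  set A₂ : ℂ := (ρz : ℂ) * Complex.exp ((φc : ℂ) * Complex.I) with hA₂def
  set c₂ : ℂ := (Δ : ℂ) * Complex.I with hc₂def
  have hcirc_eq : ∀ s : ℝ, A₂ * Complex.exp ((s:ℂ) * c₂) = circPt ρz (φc + s * Δ) := by
    intro s
    simp only [circPt, hA₂def, hc₂def]
    push_cast
    rw [add_mul, Complex.exp_add]
    ring
  have hcirc := gronwall_along_path hf hmaps hCa hε hε1 A₂ c₂ zero_le_one (fun s hs => by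
    refine ⟨ρz, φc + s * Δ, le_trans (le_of_eq rfl) hRz, ?_, ?_, hcirc_eq s⟩
    · have h1 : φc + s * Δ = (1 - s) * φc + s * φz := by rw [hΔdef]; ring
      rw [h1]
      have e1 : (1 - s) * (θ₁ + ε) ≤ (1 - s) * φc :=
        mul_le_mul_of_nonneg_left hφcε1 (by linarith [hs.2])
      have e2 : s * (θ₁ + ε) ≤ s * φz := mul_le_mul_of_nonneg_left hφzin1.le hs.1
      nlinarith [e1, e2]
    · have h1 : φc + s * Δ = (1 - s) * φc + s * φz := by rw [hΔdef]; ring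
      rw [h1]
      have e1 : (1 - s) * φc ≤ (1 - s) * (θ₂ - ε) :=
        mul_le_mul_of_nonneg_left hφcε2 (by linarith [hs.2])
      have e2 : s * φz ≤ s * (θ₂ - ε) := mul_le_mul_of_nonneg_left hφzin2.le hs.1
      nlinarith [e1, e2])
  have hγ1 : A₂ * Complex.exp (((1:ℝ):ℂ) * c₂) = circPt ρz φz := by
    rw [hcirc_eq 1]
    congr 1
    rw [hΔdef]; ring
  have hγ0' : A₂ * Complex.exp ((0:ℂ) * c₂) = circPt ρz φc := by
    have h := hcirc_eq 0
    push_cast at h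
    rw [h]
    congr 1
    ring
  rw [hγ1, hγ0'] at hcirc
  -- combine the two estimates
  have hc₂norm : ‖c₂‖ = |Δ| := by
    rw [hc₂def, norm_mul, Complex.norm_real, Complex.norm_I, mul_one, Real.norm_eq_abs]
  have hΔbound : |Δ| ≤ θ₂ - θ₁ := by
    rw [hΔdef, abs_le]
    constructor <;> [linarith [hφz1, hφcε2, hε]; linarith [hφz2, hφcε1, hε]]
  have hEbound : Real.exp (‖c₂‖ * (8 / (Ca * ε)) * 1) ≤ E := by
    rw [hEdef, Real.exp_le_exp, hc₂norm, mul_one]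
    apply mul_le_mul_of_nonneg_right hΔbound
    positivity
  have hfinal1 : ‖f (circPt ρz φz) - a‖ ≤ M₀ * Real.exp (d * T) * E := by
    calc ‖f (circPt ρz φz) - a‖
        ≤ ‖f (circPt ρz φc) - a‖ * Real.exp (‖c₂‖ * (8 / (Ca * ε)) * 1) := hcirc
      _ ≤ (M₀ * Real.exp (d * T)) * E := by
          apply mul_le_mul hrad' hEbound (Real.exp_pos _).le
          positivity
  -- convert exp(d T) into a power of ρz
  have hexp_rpow : Real.exp (d * T) ≤ ρz ^ d := by
    have hTle : T ≤ Real.log ρz := by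
      rw [hTdef]
      apply Real.log_le_log (by positivity)
      exact div_le_self (by linarith) hR₀1
    calc Real.exp (d * T) ≤ Real.exp (d * Real.log ρz) :=
          Real.exp_le_exp.2 (mul_le_mul_of_nonneg_left hTle hd.le)
      _ = ρz ^ d := by
          rw [Real.rpow_def_of_pos (by linarith : (0:ℝ) < ρz)]
          ring_nf
  have hrpow1 : (1:ℝ) ≤ ρz ^ d := by
    calc (1:ℝ) = (1:ℝ) ^ d := (Real.one_rpow d).symm
      _ ≤ ρz ^ d := Real.rpow_le_rpow (by norm_num) hρz1 hd.le
  have hM₀0 : 0 ≤ M₀ := norm_nonneg _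
  calc ‖f (circPt ρz φz)‖ = ‖(f (circPt ρz φz) - a) + a‖ := by rw [sub_add_cancel]
    _ ≤ ‖f (circPt ρz φz) - a‖ + ‖a‖ := norm_add_le _ _
    _ ≤ M₀ * Real.exp (d * T) * E + ‖a‖ := by linarith [hfinal1]
    _ ≤ M₀ * ρz ^ d * E + ‖a‖ * ρz ^ d := by
        have h1 : M₀ * Real.exp (d * T) * E ≤ M₀ * ρz ^ d * E := by
          apply mul_le_mul_of_nonneg_right _ (by linarith : (0:ℝ) ≤ E)
          exact mul_le_mul_of_nonneg_left hexp_rpow hM₀0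
        have h2 : ‖a‖ ≤ ‖a‖ * ρz ^ d := le_mul_of_one_le_right (norm_nonneg a) hrpow1
        linarith
    _ = (M₀ * E + ‖a‖) * ρz ^ d := by ring
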